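/- Let N ∈ ℕ, let θ₀, …, θ_N be nonnegative real numbers with θ_N ≥ c for some c > 0, and define σ(E) := Σ_{k=0}^{N} θ_k·E^k for E ≥ 0. Then for all vectors a, b ∈ ℝⁿ one has (σ(‖b‖)·b − σ(‖a‖)·a) · (b − a) ≥ (c / 2^{N+1})·‖b − a‖^{N+2}. (The verification that polynomial electrical conductivities satisfy hypothesis (H5) with p = N + 2.) -/

import Mathlib

open scoped RealInnerProductSpace

/-- **Polynomial conductivities satisfy (H5) with `p = N + 2`**: if
`σ(E) = Σ_{k=0}^N θ_k E^k` with `θ_k ≥ 0` and `θ_N ≥ c > 0`, then for all `a, b ∈ ℝⁿ`,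
`(σ(‖b‖)·b − σ(‖a‖)·a)·(b − a) ≥ (c/2^{N+1})·‖b − a‖^{N+2}`. -/
theorem polynomial_conductivity_H5
    {n : ℕ} (N : ℕ) (c : ℝ) (hc : 0 < c) (θ : ℕ → ℝ)
    (hθ : ∀ k ≤ N, 0 ≤ θ k) (hθN : c ≤ θ N)
    (a b : EuclideanSpace ℝ (Fin n)) :
    c / 2 ^ (N + 1) * ‖b - a‖ ^ (N + 2) ≤
      ⟪(∑ k ∈ Finset.range (N + 1), θ k * ‖b‖ ^ k) • b -
        (∑ k ∈ Finset.range (N + 1), θ k * ‖a‖ ^ k) • a, b - a⟫ := by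
  have hs0 : (0:ℝ) ≤ ‖a‖ := norm_nonneg a
  have ht0 : (0:ℝ) ≤ ‖b‖ := norm_nonneg b
  have hd0 : (0:ℝ) ≤ ‖b - a‖ := norm_nonneg _
  set s : ℝ := ‖a‖ with hs
  set t : ℝ := ‖b‖ with ht
  set d : ℝ := ‖b - a‖ with hd
  have hip : ⟪a, b⟫ = (t ^ 2 + s ^ 2 - d ^ 2) / 2 := by
    have h := norm_sub_sq_real b a
    have hc' : ⟪b, a⟫ = ⟪a, b⟫ := real_inner_comm a b
    rw [hc'] at h
    rw [← hd, ← ht, ← hs] at h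
    linarith
  -- expand inner product
  have hexp : ⟪(∑ k ∈ Finset.range (N + 1), θ k * t ^ k) • b -
        (∑ k ∈ Finset.range (N + 1), θ k * s ^ k) • a, b - a⟫
      = ∑ k ∈ Finset.range (N + 1),
          θ k * ((t ^ k + s ^ k) / 2 * d ^ 2 + (t ^ k - s ^ k) * (t ^ 2 - s ^ 2) / 2) := by
    rw [inner_sub_left, inner_sub_right, inner_sub_right, real_inner_smul_left,
      real_inner_smul_left, real_inner_smul_left, real_inner_smul_left,
      real_inner_self_eq_norm_sq, real_inner_self_eq_norm_sq, real_inner_comm a b, hip]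
    rw [← ht, ← hs]
    rw [Finset.sum_mul, Finset.sum_mul, Finset.sum_mul, Finset.sum_mul,
      ← Finset.sum_sub_distrib, ← Finset.sum_sub_distrib, ← Finset.sum_sub_distrib]
    refine Finset.sum_congr rfl fun k _ => ?_
    ring
  rw [hexp]
  -- each term is nonnegative
  have hmono : ∀ k : ℕ, 0 ≤ (t ^ k - s ^ k) * (t ^ 2 - s ^ 2) := by
    intro k
    rcases le_total s t with h | h
    · nlinarith [pow_le_pow_left₀ hs0 h k, pow_le_pow_left₀ hs0 h 2]
    · nlinarith [pow_le_pow_left₀ ht0 h k, pow_le_pow_left₀ ht0 h 2]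
  have hterm : ∀ k ∈ Finset.range (N + 1),
      0 ≤ θ k * ((t ^ k + s ^ k) / 2 * d ^ 2 + (t ^ k - s ^ k) * (t ^ 2 - s ^ 2) / 2) := by
    intro k hk
    refine mul_nonneg (hθ k (Nat.lt_succ_iff.mp (Finset.mem_range.mp hk))) ?_
    have := hmono k
    have h1 : 0 ≤ (t ^ k + s ^ k) / 2 * d ^ 2 :=
      mul_nonneg (by positivity) (sq_nonneg d)
    linarith
  -- the sum dominates the k = N term
  have hsingle := Finset.single_le_sum hterm (Finset.self_mem_range_succ N)
  refine le_trans ?_ hsingle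
  -- bound the k = N term from below
  have hdts : d ≤ t + s := norm_sub_le b a
  have hdN : d ^ N ≤ 2 ^ N * (t ^ N + s ^ N) := by
    have h1 : d ^ N ≤ (t + s) ^ N := pow_le_pow_left₀ hd0 hdts N
    rcases le_total s t with h | h
    · have h2 : (t + s) ^ N ≤ (2 * t) ^ N := pow_le_pow_left₀ (by linarith) (by linarith) N
      have h3 : (0:ℝ) ≤ s ^ N := pow_nonneg hs0 N
      rw [mul_pow] at h2
      nlinarith [pow_pos (show (0:ℝ) < 2 by norm_num) N]
    · have h2 : (t + s) ^ N ≤ (2 * s) ^ N := pow_le_pow_left₀ (by linarith) (by linarith) N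
      have h3 : (0:ℝ) ≤ t ^ N := pow_nonneg ht0 N
      rw [mul_pow] at h2
      nlinarith [pow_pos (show (0:ℝ) < 2 by norm_num) N]
  have h2N : (0:ℝ) < 2 ^ N := pow_pos (by norm_num) N
  have hkey : c / 2 ^ (N + 1) * d ^ (N + 2) ≤ c * ((t ^ N + s ^ N) / 2 * d ^ 2) := by
    have hdd : d ^ (N + 2) = d ^ N * d ^ 2 := by ring
    rw [hdd, pow_succ]
    have h4 : d ^ N * d ^ 2 ≤ 2 ^ N * (t ^ N + s ^ N) * d ^ 2 :=
      mul_le_mul_of_nonneg_right hdN (sq_nonneg d)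
    rw [div_mul_eq_mul_div, div_le_iff₀ (by positivity)]
    nlinarith [sq_nonneg d, pow_nonneg hs0 N, pow_nonneg ht0 N]
  refine le_trans hkey ?_
  have hb : (t ^ N + s ^ N) / 2 * d ^ 2 ≤
      (t ^ N + s ^ N) / 2 * d ^ 2 + (t ^ N - s ^ N) * (t ^ 2 - s ^ 2) / 2 := by
    linarith [hmono N]
  have hnn : 0 ≤ (t ^ N + s ^ N) / 2 * d ^ 2 :=
    mul_nonneg (by positivity) (sq_nonneg d)
  calc c * ((t ^ N + s ^ N) / 2 * d ^ 2)
      ≤ θ N * ((t ^ N + s ^ N) / 2 * d ^ 2) := mul_le_mul_of_nonneg_right hθN hnn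
    _ ≤ θ N * ((t ^ N + s ^ N) / 2 * d ^ 2 + (t ^ N - s ^ N) * (t ^ 2 - s ^ 2) / 2) :=
        mul_le_mul_of_nonneg_left hb (le_trans hc.le hθN)
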